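/- Let K ∈ ℕ and let f₁, f₂ : ℝ → ℝ be real-valued trigonometric polynomials given by f₁(x) = Σ_{n=−K}^{K} aₙ·e^{i·n·x} and f₂(x) = Σ_{m=−K}^{K} b_m·e^{i·m·x} with complex coefficients aₙ, b_m. Then the transformed covariance satisfies τ(f₁,f₂) = Σ_{n=−K}^{K} Σ_{m=−K}^{K} aₙ·b_m·(e^{−n·m·σij} − 1)·e^{−(n²·σii + m²·σjj)/2}. -/

import Mathlib

open MeasureTheory Real

/-- Centered bivariate Gaussian density with covariance entries `σii, σjj, σij`. -/
noncomputable def gaussPDF2 (σii σjj σij : ℝ) (x w : ℝ) : ℝ :=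
  (1 / (2 * π * Real.sqrt (σii * σjj - σij ^ 2))) *
    Real.exp (-(σjj * x ^ 2 - 2 * σij * x * w + σii * w ^ 2) / (2 * (σii * σjj - σij ^ 2)))

/-- Centered univariate Gaussian density with variance `σ`. -/
noncomputable def gaussPDF1 (σ x : ℝ) : ℝ :=
  (1 / Real.sqrt (2 * π * σ)) * Real.exp (-x ^ 2 / (2 * σ))

/-- Transformed mean `ν(f)`. -/
noncomputable def transMean (σ : ℝ) (f : ℝ → ℝ) : ℝ := ∫ x : ℝ, f x * gaussPDF1 σ x

/-- Transformed covariance `τ(f, g)`. -/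
noncomputable def transCov (σii σjj σij : ℝ) (f g : ℝ → ℝ) : ℝ :=
  (∫ q : ℝ × ℝ, f q.1 * g q.2 * gaussPDF2 σii σjj σij q.1 q.2) -
    transMean σii f * transMean σjj g

section Aux

lemma integrable_cexp_mul_gaussPDF1 {σ : ℝ} (hσ : 0 < σ) (c : ℂ) :
    Integrable fun u : ℝ ↦ Complex.exp (c * u) * (gaussPDF1 σ u : ℂ) := by
  have hb : ((-(1/(2*σ)) : ℝ) : ℂ).re < 0 := by
    rw [Complex.ofReal_re]; simp only [neg_lt_zero]; positivity
  have h : ∀ u : ℝ, Complex.exp (c * u) * (gaussPDF1 σ u : ℂ)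
      = ((1 / Real.sqrt (2 * π * σ) : ℝ) : ℂ)
          * Complex.exp (((-(1/(2*σ)) : ℝ) : ℂ) * (u:ℂ) ^ 2 + c * u + 0) := by
    intro u
    simp only [gaussPDF1, Complex.ofReal_mul, Complex.ofReal_exp]
    rw [mul_comm, mul_assoc, ← Complex.exp_add]
    congr 2
    push_cast
    have : (σ:ℂ) ≠ 0 := by exact_mod_cast hσ.ne'
    field_simp
    ring
  simp only [h]
  exact (integrable_cexp_quadratic' hb c 0).const_mul _

lemma integral_cexp_mul_gaussPDF1 {σ : ℝ} (hσ : 0 < σ) (c : ℂ) :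
    ∫ u : ℝ, Complex.exp (c * u) * (gaussPDF1 σ u : ℂ) = Complex.exp (c ^ 2 * σ / 2) := by
  have hσ' : (σ:ℂ) ≠ 0 := by exact_mod_cast hσ.ne'
  have hb : ((-(1/(2*σ)) : ℝ) : ℂ).re < 0 := by
    rw [Complex.ofReal_re]; simp only [neg_lt_zero]; positivity
  have h : ∀ u : ℝ, Complex.exp (c * u) * (gaussPDF1 σ u : ℂ)
      = ((1 / Real.sqrt (2 * π * σ) : ℝ) : ℂ)
          * Complex.exp (((-(1/(2*σ)) : ℝ) : ℂ) * (u:ℂ) ^ 2 + c * u + 0) := by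
    intro u
    simp only [gaussPDF1, Complex.ofReal_mul, Complex.ofReal_exp]
    rw [mul_comm, mul_assoc, ← Complex.exp_add]
    congr 2
    push_cast
    field_simp
    ring
  simp only [h]
  rw [MeasureTheory.integral_const_mul, integral_cexp_quadratic hb c 0]
  have h1 : ((π : ℂ) / -((-(1/(2*σ)) : ℝ) : ℂ)) = ((2 * π * σ : ℝ) : ℂ) := by
    push_cast; field_simp
  have h2 : ((2 * π * σ : ℝ) : ℂ) ^ ((1:ℂ)/2) = ((Real.sqrt (2*π*σ) : ℝ) : ℂ) := by
    rw [Real.sqrt_eq_rpow, Complex.ofReal_cpow (by positivity)]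
    norm_num
  have h3 : (0 : ℂ) - c ^ 2 / (4 * ((-(1/(2*σ)) : ℝ) : ℂ)) = c ^ 2 * σ / 2 := by
    push_cast; field_simp; ring
  rw [h1, h2, h3, ← mul_assoc, ← Complex.ofReal_mul]
  have : (1 / Real.sqrt (2 * π * σ)) * Real.sqrt (2*π*σ) = 1 := by
    rw [one_div, inv_mul_cancel₀ (by positivity)]
  rw [this, Complex.ofReal_one, one_mul]

noncomputable def shearH (α : ℝ) : ℝ × ℝ ≃ₜ ℝ × ℝ where
  toFun p := (p.1, p.2 + α * p.1)
  invFun p := (p.1, p.2 - α * p.1)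
  left_inv p := by simp
  right_inv p := by simp
  continuous_toFun := by continuity
  continuous_invFun := by continuity

lemma shearH_mp (α : ℝ) :
    MeasurePreserving (shearH α) (volume : Measure (ℝ × ℝ)) volume := by
  rw [show (volume : Measure (ℝ × ℝ)) = (volume : Measure ℝ).prod volume from
    MeasureTheory.Measure.volume_eq_prod ℝ ℝ]
  exact (MeasurePreserving.id volume).skew_product
    (g := fun a c => c + α * a)
    (by fun_prop)
    (Filter.Eventually.of_forall fun a => map_add_right_eq_self volume (α * a))

lemma key_prod_integrable (α : ℝ) {g h : ℝ → ℂ} (hg : Integrable g) (hh : Integrable h) :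
    Integrable (fun p : ℝ × ℝ ↦ g (p.1 - α * p.2) * h p.2) := by
  set F' : ℝ × ℝ → ℂ := fun p ↦ g (p.2 - α * p.1) * h p.1 with hF'
  have hemb : MeasurableEmbedding (shearH α) :=
    (shearH α).toMeasurableEquiv.measurableEmbedding
  have hcomp : (F' ∘ (shearH α)) = fun p : ℝ × ℝ => h p.1 * g p.2 := by
    funext p
    simp only [Function.comp_apply, hF', shearH, Homeomorph.homeomorph_mk_coe,
      Equiv.coe_fn_mk]
    rw [add_sub_cancel_right, mul_comm]
  have hF'int : Integrable F' := by
    rw [← (shearH_mp α).integrable_comp_emb hemb, hcomp,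
      show (volume : Measure (ℝ × ℝ)) = (volume : Measure ℝ).prod volume from
        MeasureTheory.Measure.volume_eq_prod ℝ ℝ]
    exact hh.mul_prod hg
  have : Integrable (F' ∘ Prod.swap) ((volume : Measure ℝ).prod volume) := by
    apply MeasureTheory.Integrable.swap
    rwa [show (volume : Measure ℝ).prod volume = (volume : Measure (ℝ × ℝ)) from
      (MeasureTheory.Measure.volume_eq_prod ℝ ℝ).symm]
  rw [show (volume : Measure (ℝ × ℝ)) = (volume : Measure ℝ).prod volume from
    MeasureTheory.Measure.volume_eq_prod ℝ ℝ]
  convert this using 1 <;> rfl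

lemma key_prod_integral (α : ℝ) (g h : ℝ → ℂ) :
    ∫ p : ℝ × ℝ, g (p.1 - α * p.2) * h p.2 = (∫ u, g u) * (∫ w, h w) := by
  set F' : ℝ × ℝ → ℂ := fun p ↦ g (p.2 - α * p.1) * h p.1 with hF'
  have hemb : MeasurableEmbedding (shearH α) :=
    (shearH α).toMeasurableEquiv.measurableEmbedding
  have hcomp : ∀ p : ℝ × ℝ, F' (shearH α p) = h p.1 * g p.2 := by
    intro p
    simp only [hF', shearH, Homeomorph.homeomorph_mk_coe, Equiv.coe_fn_mk]
    rw [add_sub_cancel_right, mul_comm]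
  have h1 : ∫ p : ℝ × ℝ, g (p.1 - α * p.2) * h p.2
      = ∫ p : ℝ × ℝ, F' p.swap ∂((volume : Measure ℝ).prod volume) := by
    rw [show (volume : Measure (ℝ × ℝ)) = (volume : Measure ℝ).prod volume from
      MeasureTheory.Measure.volume_eq_prod ℝ ℝ]
    rfl
  have h2 : ∫ p : ℝ × ℝ, F' p.swap ∂((volume : Measure ℝ).prod volume)
      = ∫ p : ℝ × ℝ, F' p ∂((volume : Measure ℝ).prod volume) :=
    MeasureTheory.integral_prod_swap F'
  have h3 : ∫ p : ℝ × ℝ, F' p ∂((volume : Measure ℝ).prod volume)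
      = ∫ p : ℝ × ℝ, F' (shearH α p) := by
    rw [(shearH_mp α).integral_comp hemb,
      show (volume : Measure (ℝ × ℝ)) = (volume : Measure ℝ).prod volume from
        MeasureTheory.Measure.volume_eq_prod ℝ ℝ]
  have h4 : ∫ p : ℝ × ℝ, F' (shearH α p) = (∫ w, h w) * (∫ u, g u) := by
    simp only [hcomp]
    rw [show (volume : Measure (ℝ × ℝ)) = (volume : Measure ℝ).prod volume from
      MeasureTheory.Measure.volume_eq_prod ℝ ℝ]
    exact integral_prod_mul h g
  rw [h1, h2, h3, h4, mul_comm]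

lemma gaussPDF2_factor {σii σjj σij : ℝ} (hjj : 0 < σjj)
    (hd : 0 < σii * σjj - σij ^ 2) (x w : ℝ) :
    gaussPDF2 σii σjj σij x w
      = gaussPDF1 ((σii * σjj - σij ^ 2) / σjj) (x - σij / σjj * w) * gaussPDF1 σjj w := by
  unfold gaussPDF2 gaussPDF1
  rw [mul_mul_mul_comm, ← Real.exp_add]
  congr 1
  · rw [div_mul_div_comm, one_mul]
    congr 1
    rw [← Real.sqrt_mul (by positivity),
      show 2 * π * ((σii * σjj - σij ^ 2) / σjj) * (2 * π * σjj)
        = (2 * π) ^ 2 * (σii * σjj - σij ^ 2) by field_simp,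
      Real.sqrt_mul (by positivity), Real.sqrt_sq (by positivity)]
  · congr 1
    have := hd.ne'
    rw [div_add_div _ _ (by positivity) (by positivity), div_eq_div_iff (by positivity) (by positivity)]
    field_simp
    ring

lemma cexp_gaussPDF2_eq {σii σjj σij : ℝ} (hjj : 0 < σjj)
    (hd : 0 < σii * σjj - σij ^ 2) (c₁ c₂ : ℂ) (q : ℝ × ℝ) :
    Complex.exp (c₁ * q.1 + c₂ * q.2) * (gaussPDF2 σii σjj σij q.1 q.2 : ℂ)
      = (fun u : ℝ ↦ Complex.exp (c₁ * u) * (gaussPDF1 ((σii * σjj - σij ^ 2) / σjj) u : ℂ))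
          (q.1 - σij / σjj * q.2)
        * (fun w : ℝ ↦ Complex.exp ((c₁ * (σij / σjj) + c₂) * w) * (gaussPDF1 σjj w : ℂ)) q.2 := by
  simp only
  rw [gaussPDF2_factor hjj hd, Complex.ofReal_mul,
    show c₁ * q.1 + c₂ * q.2
      = c₁ * ((q.1 - σij / σjj * q.2 : ℝ) : ℂ) + (c₁ * (σij / σjj) + c₂) * q.2 by
        push_cast; ring,
    Complex.exp_add]
  ring

lemma integrable_cexp_gaussPDF2 {σii σjj σij : ℝ} (hii : 0 < σii) (hjj : 0 < σjj)
    (hd : 0 < σii * σjj - σij ^ 2) (c₁ c₂ : ℂ) :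
    Integrable (fun q : ℝ × ℝ ↦
      Complex.exp (c₁ * q.1 + c₂ * q.2) * (gaussPDF2 σii σjj σij q.1 q.2 : ℂ)) := by
  have hs : 0 < (σii * σjj - σij ^ 2) / σjj := by positivity
  simp only [cexp_gaussPDF2_eq hjj hd]
  exact key_prod_integrable _ (integrable_cexp_mul_gaussPDF1 hs c₁)
    (integrable_cexp_mul_gaussPDF1 hjj _)

lemma integral_cexp_gaussPDF2 {σii σjj σij : ℝ} (hii : 0 < σii) (hjj : 0 < σjj)
    (hd : 0 < σii * σjj - σij ^ 2) (c₁ c₂ : ℂ) :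
    ∫ q : ℝ × ℝ, Complex.exp (c₁ * q.1 + c₂ * q.2) * (gaussPDF2 σii σjj σij q.1 q.2 : ℂ)
      = Complex.exp (c₁ ^ 2 * ((σii * σjj - σij ^ 2) / σjj) / 2
          + (c₁ * (σij / σjj) + c₂) ^ 2 * σjj / 2) := by
  have hs : 0 < (σii * σjj - σij ^ 2) / σjj := by positivity
  simp only [cexp_gaussPDF2_eq hjj hd]
  have h5 := key_prod_integral (σij / σjj)
    (fun u : ℝ ↦ Complex.exp (c₁ * u) * (gaussPDF1 ((σii * σjj - σij ^ 2) / σjj) u : ℂ))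
    (fun w : ℝ ↦ Complex.exp ((c₁ * (σij / σjj) + c₂) * w) * (gaussPDF1 σjj w : ℂ))
  rw [integral_cexp_mul_gaussPDF1 hs, integral_cexp_mul_gaussPDF1 hjj,
    ← Complex.exp_add] at h5
  exact h5.trans (by push_cast; ring_nf)

end Aux

lemma ofReal_integral_c {α : Type*} [MeasureSpace α] (f : α → ℝ) :
    ((∫ x, f x : ℝ) : ℂ) = ∫ x, (f x : ℂ) := (integral_ofReal (𝕜 := ℂ)).symm

lemma transMean_eq {σ : ℝ} (hσ : 0 < σ) (K : ℕ) (cf : ℤ → ℂ) (f : ℝ → ℝ)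
    (hf : ∀ x : ℝ, (f x : ℂ) =
      ∑ n ∈ Finset.Icc (-(K : ℤ)) (K : ℤ), cf n * Complex.exp (Complex.I * n * x)) :
    (transMean σ f : ℂ)
      = ∑ n ∈ Finset.Icc (-(K : ℤ)) (K : ℤ),
          cf n * Complex.exp ((Complex.I * n) ^ 2 * σ / 2) := by
  have key : ∀ x : ℝ, ((f x * gaussPDF1 σ x : ℝ) : ℂ)
      = ∑ n ∈ Finset.Icc (-(K : ℤ)) (K : ℤ),
          cf n * (Complex.exp ((Complex.I * n) * x) * (gaussPDF1 σ x : ℂ)) := by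
    intro x
    rw [Complex.ofReal_mul, hf x, Finset.sum_mul]
    exact Finset.sum_congr rfl fun n _ => by ring
  rw [transMean, ofReal_integral_c]
  simp only [key]
  rw [MeasureTheory.integral_finset_sum _ (fun (n : ℤ) (_ : n ∈ Finset.Icc (-(K : ℤ)) (K : ℤ)) =>
    ((integrable_cexp_mul_gaussPDF1 hσ (Complex.I * (n : ℂ))).const_mul (cf n)))]
  exact Finset.sum_congr rfl fun n _ => by
    rw [MeasureTheory.integral_const_mul, integral_cexp_mul_gaussPDF1 hσ]

theorem transformed_covariance_fourier_series_trigpoly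
    (σii σjj σij : ℝ) (hii : 0 < σii) (hjj : 0 < σjj)
    (hd : 0 < σii * σjj - σij ^ 2)
    (K : ℕ) (a b : ℤ → ℂ) (f₁ f₂ : ℝ → ℝ)
    (hf₁ : ∀ x : ℝ, (f₁ x : ℂ) =
      ∑ n ∈ Finset.Icc (-(K : ℤ)) (K : ℤ), a n * Complex.exp (Complex.I * n * x))
    (hf₂ : ∀ x : ℝ, (f₂ x : ℂ) =
      ∑ m ∈ Finset.Icc (-(K : ℤ)) (K : ℤ), b m * Complex.exp (Complex.I * m * x)) :
    (transCov σii σjj σij f₁ f₂ : ℂ) =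
      ∑ n ∈ Finset.Icc (-(K : ℤ)) (K : ℤ), ∑ m ∈ Finset.Icc (-(K : ℤ)) (K : ℤ),
        a n * b m * (Complex.exp (-((n : ℝ) * (m : ℝ) * σij : ℝ)) - 1) *
          Complex.exp (-(((n : ℝ) ^ 2 * σii + (m : ℝ) ^ 2 * σjj) / 2 : ℝ)) := by
  have hjj' : (σjj : ℂ) ≠ 0 := by exact_mod_cast hjj.ne'
  set s : Finset ℤ := Finset.Icc (-(K : ℤ)) (K : ℤ) with hs
  have h2d : ((∫ q : ℝ × ℝ, f₁ q.1 * f₂ q.2 * gaussPDF2 σii σjj σij q.1 q.2 : ℝ) : ℂ)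
      = ∑ p ∈ s ×ˢ s, a p.1 * b p.2 *
          Complex.exp ((Complex.I * p.1) ^ 2 * ((σii * σjj - σij ^ 2) / σjj) / 2
            + ((Complex.I * p.1) * (σij / σjj) + Complex.I * p.2) ^ 2 * σjj / 2) := by
    have key : ∀ q : ℝ × ℝ, ((f₁ q.1 * f₂ q.2 * gaussPDF2 σii σjj σij q.1 q.2 : ℝ) : ℂ)
        = ∑ p ∈ s ×ˢ s, a p.1 * b p.2 *
            (Complex.exp ((Complex.I * p.1) * q.1 + (Complex.I * p.2) * q.2)
              * (gaussPDF2 σii σjj σij q.1 q.2 : ℂ)) := by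
      intro q
      rw [Complex.ofReal_mul, Complex.ofReal_mul, hf₁ q.1, hf₂ q.2, Finset.sum_mul_sum,
        Finset.sum_product, Finset.sum_mul]
      refine Finset.sum_congr rfl fun n _ => ?_
      rw [Finset.sum_mul]
      refine Finset.sum_congr rfl fun m _ => ?_
      rw [Complex.exp_add]
      ring
    rw [ofReal_integral_c]
    simp only [key]
    rw [MeasureTheory.integral_finset_sum _ (fun p _ =>
      ((integrable_cexp_gaussPDF2 hii hjj hd _ _).const_mul _))]
    refine Finset.sum_congr rfl fun p _ => ?_
    rw [MeasureTheory.integral_const_mul, integral_cexp_gaussPDF2 hii hjj hd]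
  rw [transCov, Complex.ofReal_sub, Complex.ofReal_mul, h2d,
    transMean_eq hii K a f₁ hf₁, transMean_eq hjj K b f₂ hf₂,
    Finset.sum_mul_sum, Finset.sum_product, ← Finset.sum_sub_distrib]
  refine Finset.sum_congr rfl fun n hn => ?_
  rw [← Finset.sum_sub_distrib]
  refine Finset.sum_congr rfl fun m hm => ?_
  have he1 : (Complex.I * n) ^ 2 * ((σii * σjj - σij ^ 2) / σjj) / 2
      + ((Complex.I * n) * (σij / σjj) + Complex.I * m) ^ 2 * σjj / 2
      = (-(((n : ℝ) * (m : ℝ) * σij : ℝ) : ℂ))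
        + (-((((n : ℝ) ^ 2 * σii + (m : ℝ) ^ 2 * σjj) / 2 : ℝ) : ℂ)) := by
    push_cast
    field_simp
    ring_nf
    simp only [Complex.I_sq]
    ring
  have hx : (Complex.I * n) ^ 2 * σii / 2 + (Complex.I * m) ^ 2 * σjj / 2
      = (-((((n : ℝ) ^ 2 * σii + (m : ℝ) ^ 2 * σjj) / 2 : ℝ) : ℂ)) := by
    push_cast
    simp only [mul_pow, Complex.I_sq]
    ring
  have hE1 : Complex.exp ((Complex.I * n) ^ 2 * ((σii * σjj - σij ^ 2) / σjj) / 2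
        + ((Complex.I * n) * (σij / σjj) + Complex.I * m) ^ 2 * σjj / 2)
      = Complex.exp (-(((n : ℝ) * (m : ℝ) * σij : ℝ) : ℂ))
        * Complex.exp (-((((n : ℝ) ^ 2 * σii + (m : ℝ) ^ 2 * σjj) / 2 : ℝ) : ℂ)) := by
    rw [he1, Complex.exp_add]
  have hX2 : Complex.exp ((Complex.I * n) ^ 2 * σii / 2)
        * Complex.exp ((Complex.I * m) ^ 2 * σjj / 2)
      = Complex.exp (-((((n : ℝ) ^ 2 * σii + (m : ℝ) ^ 2 * σjj) / 2 : ℝ) : ℂ)) := by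
    rw [← Complex.exp_add, hx]
  linear_combination a n * b m * hE1 - a n * b m * hX2
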